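/- For each d ≥ 1, the set of cycle-free d-partitions of K_{2d} is nonempty: the tuple E_d = (Ω₁^{(d)},...,Ω_d^{(d)}) is a cycle-free d-partition of K_{2d}. -/

import Mathlib

open SimpleGraph

/-- A cycle-free `d`-partition of the complete graph on `Fin n`: each unordered pair of
distinct vertices is an edge of exactly one component, and every component is acyclic. -/
def IsCFP {n d : ℕ} (Γ : Fin d → SimpleGraph (Fin n)) : Prop :=
  (∀ u v : Fin n, u ≠ v → ∃! i, (Γ i).Adj u v) ∧ ∀ i, (Γ i).IsAcyclic

/-- `(u,v)` is the same unordered pair as `(a,b)`. -/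
def SamePair {n : ℕ} (u v a b : Fin n) : Prop := (u = a ∧ v = b) ∨ (u = b ∧ v = a)

/-- The partitions `P` and `Q` differ on the edge `(u,v)`. -/
def Differs {n d : ℕ} (P Q : Fin d → SimpleGraph (Fin n)) (u v : Fin n) : Prop :=
  ∃ i, ¬ ((Q i).Adj u v ↔ (P i).Adj u v)

/-- `Q` agrees with `P` on every edge except the edges `(x,y)`, `(x,z)`, `(y,z)`,
and differs from `P` on at least two of those three edges. -/
def FlipCond {n d : ℕ} (x y z : Fin n) (P Q : Fin d → SimpleGraph (Fin n)) : Prop :=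
  (∀ u v : Fin n, ¬ SamePair u v x y → ¬ SamePair u v x z → ¬ SamePair u v y z →
      ∀ i, ((Q i).Adj u v ↔ (P i).Adj u v)) ∧
  ((Differs P Q x y ∧ Differs P Q x z) ∨ (Differs P Q x y ∧ Differs P Q y z) ∨
    (Differs P Q x z ∧ Differs P Q y z))

/-- One involution move between cycle-free partitions. -/
def Step {n d : ℕ} (P Q : Fin d → SimpleGraph (Fin n)) : Prop :=
  IsCFP P ∧ IsCFP Q ∧ ∃ x y z : Fin n, x ≠ y ∧ x ≠ z ∧ y ≠ z ∧ FlipCond x y z P Q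

/-- Involution equivalence: a finite sequence of involution moves. -/
def InvEquiv {n d : ℕ} : (Fin d → SimpleGraph (Fin n)) → (Fin d → SimpleGraph (Fin n)) → Prop :=
  Relation.ReflTransGen Step

/-- The graph `Ω_t^{(d)}` on vertices `{1,…,2d}` (vertex `v : Fin (2d)` has label `v+1`):
the edge `(i,j)`, `i<j`, belongs to `Ω_t` iff `i+j` is even and `i ∈ {2t-1,2t}`,
or `i+j` is odd and `j ∈ {2t-1,2t}`. -/
def Omega (d t : ℕ) : SimpleGraph (Fin (2*d)) :=
  SimpleGraph.fromRel (fun u v =>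
    u.1 < v.1 ∧
    (((u.1 + v.1) % 2 = 0 ∧ (u.1 + 1 = 2*t - 1 ∨ u.1 + 1 = 2*t)) ∨
     ((u.1 + v.1) % 2 = 1 ∧ (v.1 + 1 = 2*t - 1 ∨ v.1 + 1 = 2*t))))

/-- The standard twin-star cycle-free `d`-partition `E_d = (Ω₁,…,Ω_d)`. -/
def Ed (d : ℕ) : Fin d → SimpleGraph (Fin (2*d)) := fun t => Omega d (t.1 + 1)

/-- The twin-star graph `TS_d` with `2d` vertices: centers `0` and `1` are adjacent,
center `0` is adjacent to the `d-1` leaves `2,…,d`, and center `1` to the leaves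
`d+1,…,2d-1`. -/
def TwinStar (d : ℕ) : SimpleGraph (Fin (2*d)) :=
  SimpleGraph.fromRel (fun u v =>
    (u.1 = 0 ∧ 1 ≤ v.1 ∧ v.1 ≤ d) ∨ (u.1 = 1 ∧ d + 1 ≤ v.1))

/-- The action of `(σ, τ) ∈ S_{2d} × S_d` on a `d`-partition: `σ` relabels vertices and
`τ` permutes the order of the components. -/
def actP {n d : ℕ} (σ : Equiv.Perm (Fin n)) (τ : Equiv.Perm (Fin d))
    (P : Fin d → SimpleGraph (Fin n)) : Fin d → SimpleGraph (Fin n) :=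
  fun i => (P (τ⁻¹ i)).map σ.toEmbedding

/-- One step of weak equivalence: `P = (σ,τ) · (an involution move applied to Q)`. -/
def WStep {n d : ℕ} (P Q : Fin d → SimpleGraph (Fin n)) : Prop :=
  ∃ (σ : Equiv.Perm (Fin n)) (τ : Equiv.Perm (Fin d)) (R : Fin d → SimpleGraph (Fin n)),
    Step Q R ∧ P = actP σ τ R

/-- Weak equivalence of cycle-free `d`-partitions. -/
def WeakEquiv {n d : ℕ} : (Fin d → SimpleGraph (Fin n)) → (Fin d → SimpleGraph (Fin n)) → Prop :=
  Relation.ReflTransGen WStep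

/-- Concrete arithmetic characterization of adjacency in `Ed d i`. -/
lemma Ed_adj_iff {d : ℕ} (i : Fin d) (u v : Fin (2*d)) :
    (Ed d i).Adj u v ↔ u.1 ≠ v.1 ∧
      ((u.1 < v.1 ∧ (((u.1 + v.1) % 2 = 0 ∧ (u.1 = 2*i.1 ∨ u.1 = 2*i.1 + 1)) ∨
          ((u.1 + v.1) % 2 = 1 ∧ (v.1 = 2*i.1 ∨ v.1 = 2*i.1 + 1)))) ∨
       (v.1 < u.1 ∧ (((u.1 + v.1) % 2 = 0 ∧ (v.1 = 2*i.1 ∨ v.1 = 2*i.1 + 1)) ∨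
          ((u.1 + v.1) % 2 = 1 ∧ (u.1 = 2*i.1 ∨ u.1 = 2*i.1 + 1))))) := by
  simp only [Ed, Omega, SimpleGraph.fromRel_adj, ne_eq, Fin.ext_iff]
  omega

/-- A vertex which is not one of the two centers of `Ed d i` has at most one neighbor. -/
lemma Ed_unique_nbr {d : ℕ} (i : Fin d) (w a b : Fin (2*d)) (hw1 : w.1 ≠ 2*i.1)
    (hw2 : w.1 ≠ 2*i.1 + 1) (ha : (Ed d i).Adj w a) (hb : (Ed d i).Adj w b) : a = b := by
  rw [Ed_adj_iff] at ha hb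
  exact Fin.ext (by omega)

/-- A path of length at least two starting at `a` gives a neighbor of `a` different from
the endpoint. -/
lemma exists_snd_ne_of_path {V : Type*} {G : SimpleGraph V} {a b : V} (p : G.Walk a b)
    (hp : p.IsPath) (hl : 2 ≤ p.length) : ∃ x, G.Adj a x ∧ x ≠ b := by
  cases p with
  | nil => simp at hl
  | cons h q =>
    refine ⟨_, h, ?_⟩
    intro hxb
    subst hxb
    have hq : q.IsPath := hp.of_cons
    rw [SimpleGraph.Walk.isPath_iff_eq_nil] at hq
    subst hq
    simp at hl

/-- For every `d ≥ 1`, the tuple `E_d = (Ω₁^{(d)}, …, Ω_d^{(d)})` is a cycle-free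
`d`-partition of `K_{2d}`; in particular the set of cycle-free `d`-partitions is nonempty. -/
theorem Ed_isCFP (d : ℕ) (hd : 1 ≤ d) : IsCFP (Ed d) := by
  constructor
  · -- each pair of distinct vertices is an edge of exactly one component
    intro u v huv
    have hu := u.isLt
    have hv := v.isLt
    have huv' : u.1 ≠ v.1 := fun h => huv (Fin.ext h)
    by_cases hp : (u.1 + v.1) % 2 = 0
    · refine ⟨⟨min u.1 v.1 / 2, by omega⟩, ?_, ?_⟩
      · beta_reduce
        rw [Ed_adj_iff]
        refine ⟨huv', ?_⟩
        show (u.1 < v.1 ∧ _) ∨ (v.1 < u.1 ∧ _)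
        simp only [Fin.val_mk]
        omega
      · intro j hj
        rw [Ed_adj_iff] at hj
        apply Fin.ext
        show j.1 = min u.1 v.1 / 2
        omega
    · refine ⟨⟨max u.1 v.1 / 2, by omega⟩, ?_, ?_⟩
      · beta_reduce
        rw [Ed_adj_iff]
        refine ⟨huv', ?_⟩
        show (u.1 < v.1 ∧ _) ∨ (v.1 < u.1 ∧ _)
        simp only [Fin.val_mk]
        omega
      · intro j hj
        rw [Ed_adj_iff] at hj
        apply Fin.ext
        show j.1 = max u.1 v.1 / 2
        omega
  · -- each component is acyclic
    intro i v c hc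
    have hi := i.isLt
    have hlen := hc.three_le_length
    -- find a vertex of the cycle which is not one of the two centers of `Ed d i`
    obtain ⟨w, hwmem, hw1, hw2⟩ : ∃ w ∈ c.support, w.1 ≠ 2*i.1 ∧ w.1 ≠ 2*i.1 + 1 := by
      by_contra hcon
      push_neg at hcon
      have hnd := hc.support_nodup
      have hlen2 : c.support.tail.length = c.length := by
        have h1 := c.length_support
        have h2 : c.support.length = c.support.tail.length + 1 := by
          cases hs : c.support with
          | nil => exact absurd hs c.support_ne_nil
          | cons a l => simp
        omega
      have hsub : c.support.tail.toFinset ⊆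
          {(⟨2*i.1, by omega⟩ : Fin (2*d)), ⟨2*i.1 + 1, by omega⟩} := by
        intro x hx
        have hx' : x ∈ c.support := List.mem_of_mem_tail (List.mem_toFinset.mp hx)
        simp only [Finset.mem_insert, Finset.mem_singleton, Fin.ext_iff]
        by_cases hx2 : x.1 = 2*i.1
        · exact Or.inl hx2
        · exact Or.inr (hcon x hx' hx2)
      have hcard := Finset.card_le_card hsub
      rw [List.toFinset_card_of_nodup hnd] at hcard
      have h2 : ({(⟨2*i.1, by omega⟩ : Fin (2*d)), ⟨2*i.1 + 1, by omega⟩} :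
          Finset (Fin (2*d))).card ≤ 2 :=
        (Finset.card_insert_le _ _).trans (by simp)
      omega
    have hc' := hc.rotate hwmem
    generalize c.rotate w hwmem = c' at hc'
    cases c' with
    | nil => exact absurd hc' Walk.IsCycle.not_of_nil
    | cons h p =>
      have hl3 := hc'.three_le_length
      simp only [Walk.length_cons] at hl3
      rw [Walk.cons_isCycle_iff] at hc'
      obtain ⟨hp, -⟩ := hc'
      obtain ⟨x, hwx, hxb⟩ := exists_snd_ne_of_path p.reverse hp.reverse
        (by rw [Walk.length_reverse]; omega)
      exact hxb (Ed_unique_nbr i w x _ hw1 hw2 hwx h)
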